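/- arXiv:2012.05639 — 4 statements merged into one kernel-verified Lean document; each statement's English description precedes it below -/
import Mathlib

section
/- Let n ≥ 1 and b ∈ Mat_n. Suppose p, q : ℝ → Mat_n are twice differentiable and satisfy the reduced system p''(z) = −(z/2) p(z) − b p(z) − 2 p(z) q(z) p(z) and q''(z) = −(z/2) q(z) − q(z) b − 2 q(z) p(z) q(z) for all z ∈ ℝ. Define r(t,x) = ((t³ − 3xt)/6)·I − t·b ∈ Mat_n, z(t,x) = x − t²/2, and set u(t,x) = exp(r(t,x))·p(z(t,x)) and v(t,x) = q(z(t,x))·exp(−r(t,x)), where exp is the matrix exponential. Then u and v satisfy the matrix nonlinear Schrödinger system u_t = u_{xx} + 2 u v u and v_t = −v_{xx} − 2 v u v at every point (t, x) ∈ ℝ × ℝ. -/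
section FrozenDefs

attribute [local instance] Matrix.normedAddCommGroup Matrix.normedSpace

/-- Partial derivative in the first (time) variable. -/
noncomputable def partialT {M : Type*} [NormedAddCommGroup M] [NormedSpace ℝ M]
    (F : ℝ × ℝ → M) (p : ℝ × ℝ) : M :=
  deriv (fun s => F (s, p.2)) p.1

/-- Partial derivative in the second (space) variable. -/
noncomputable def partialX {M : Type*} [NormedAddCommGroup M] [NormedSpace ℝ M]
    (F : ℝ × ℝ → M) (p : ℝ × ℝ) : M :=
  deriv (fun s => F (p.1, s)) p.2

/-- `r(t,x) = ((t³ − 3xt)/6)·I − t·b`. -/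
noncomputable def rMat (n : ℕ) (b : Matrix (Fin n) (Fin n) ℂ) (t x : ℝ) :
    Matrix (Fin n) (Fin n) ℂ :=
  (((t^3 - 3*x*t)/6 : ℝ) : ℂ) • (1 : Matrix (Fin n) (Fin n) ℂ) - (t : ℂ) • b

/-- the similarity variable `z(t,x) = x − t²/2`. -/
noncomputable def zRed (t x : ℝ) : ℝ := x - t^2/2

/-- `u(t,x) = exp(r(t,x)) · p(z(t,x))`. -/
noncomputable def uRed (n : ℕ) (b : Matrix (Fin n) (Fin n) ℂ)
    (p : ℝ → Matrix (Fin n) (Fin n) ℂ) (w : ℝ × ℝ) : Matrix (Fin n) (Fin n) ℂ :=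
  NormedSpace.exp (rMat n b w.1 w.2) * p (zRed w.1 w.2)

/-- `v(t,x) = q(z(t,x)) · exp(−r(t,x))`. -/
noncomputable def vRed (n : ℕ) (b : Matrix (Fin n) (Fin n) ℂ)
    (q : ℝ → Matrix (Fin n) (Fin n) ℂ) (w : ℝ × ℝ) : Matrix (Fin n) (Fin n) ℂ :=
  q (zRed w.1 w.2) * NormedSpace.exp (-(rMat n b w.1 w.2))

end FrozenDefs

noncomputable section NLSAuxSection

namespace NLSAux

open NormedSpace

attribute [local instance] Matrix.linftyOpNormedRing Matrix.linftyOpNormedAlgebra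

variable {n : ℕ}

local notation "M" => Matrix (Fin n) (Fin n) ℂ

/-- the topology of the operator norm, as an instance for this section. -/
abbrev topM : TopologicalSpace M := Matrix.linftyOpNormedRing.toUniformSpace.toTopologicalSpace

/-- the additive group structure, as an instance for this section. -/
abbrev acgM : AddCommGroup M := (@NonUnitalNormedRing.toNormedAddCommGroup M Matrix.linftyOpNormedRing.toNonUnitalNormedRing).toAddCommGroup

/-- the real module structure, as an instance for this section. -/
abbrev modM : Module ℝ M := (@NormedSpace.complexToReal M _ Matrix.linftyOpNormedAlgebra.toNormedSpace).toModule

attribute [local instance] topM acgM modM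

/-- primed copy of `rMat`. -/
def rMat' (n : ℕ) (b : Matrix (Fin n) (Fin n) ℂ) (t x : ℝ) :
    Matrix (Fin n) (Fin n) ℂ :=
  (((t^3 - 3*x*t)/6 : ℝ) : ℂ) • (1 : Matrix (Fin n) (Fin n) ℂ) - (t : ℂ) • b

/-- primed copy of `zRed`. -/
def zRed' (t x : ℝ) : ℝ := x - t^2/2

/-- transfer derivative facts to the entrywise-sup-norm world -/
theorem transfer₁ {f : ℝ → M} {f' : M} {x : ℝ} (h : HasDerivAt f f' x) :
    letI : TopologicalSpace M := instTopologicalSpaceMatrix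
    HasDerivAt f f' x := by
  exact h

theorem transfer₂ {f : ℝ → M} {f' : M} {x : ℝ}
    (h : letI : TopologicalSpace M := instTopologicalSpaceMatrix
      HasDerivAt f f' x) :
    HasDerivAt f f' x := by
  exact h

lemma real_smul (r : ℝ) (A : M) : (r : ℂ) • A = r • A := by
  rw [← algebraMap_smul ℂ r A]; norm_num

lemma exp_scalar_smul_one (c : ℂ) :
    exp (c • (1 : M)) = Complex.exp c • (1 : M) := by
  have h1 : c • (1 : M) = algebraMap ℂ _ c := (Algebra.algebraMap_eq_smul_one c).symm
  rw [h1, ← algebraMap_exp_comm, Algebra.algebraMap_eq_smul_one, Complex.exp_eq_exp_ℂ]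

lemma exp_factor (b : M) (c d : ℝ) :
    exp ((c : ℂ) • (1 : M) + d • b) = Complex.exp c • exp (d • b) := by
  rw [exp_add_of_commute, exp_scalar_smul_one, smul_mul_assoc, one_mul]
  exact ((Commute.one_left b).smul_left (c:ℂ)).smul_right d

lemma rMat'_eq (b : M) (t x : ℝ) :
    rMat' n b t x = (((t^3 - 3*x*t)/6 : ℝ) : ℂ) • (1 : M) + (-t : ℝ) • b := by
  rw [rMat', sub_eq_add_neg, ← neg_smul, ← real_smul]
  norm_num

lemma neg_rMat'_eq (b : M) (t x : ℝ) :
    -rMat' n b t x = ((-((t^3 - 3*x*t)/6) : ℝ) : ℂ) • (1 : M) + (t : ℝ) • b := by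
  rw [rMat', neg_sub, sub_eq_add_neg, add_comm, ← neg_smul, ← real_smul]
  norm_num

lemma exp_rMat' (b : M) (t x : ℝ) :
    exp (rMat' n b t x)
      = Complex.exp (((t^3 - 3*x*t)/6 : ℝ) : ℂ) • exp ((-t : ℝ) • b) := by
  rw [rMat'_eq, exp_factor]

lemma exp_neg_rMat' (b : M) (t x : ℝ) :
    exp (-rMat' n b t x)
      = Complex.exp ((-((t^3 - 3*x*t)/6) : ℝ) : ℂ) • exp ((t : ℝ) • b) := by
  rw [neg_rMat'_eq, exp_factor]

lemma exp_neg_mul_exp_self (A : M) : exp (-A) * exp A = 1 := by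
  rw [← exp_add_of_commute ((Commute.refl A).neg_left), neg_add_cancel, exp_zero]

lemma commute_b_exp (b : M) (t x : ℝ) :
    b * exp (rMat' n b t x) = exp (rMat' n b t x) * b := by
  refine Commute.eq (Commute.exp_right ?_)
  rw [rMat']
  exact ((Commute.one_right b).smul_right _).sub_right ((Commute.refl b).smul_right _)

lemma commute_b_exp_neg (b : M) (t x : ℝ) :
    b * exp (-rMat' n b t x) = exp (-rMat' n b t x) * b := by
  refine Commute.eq (Commute.exp_right (Commute.neg_right ?_))
  rw [rMat']
  exact ((Commute.one_right b).smul_right _).sub_right ((Commute.refl b).smul_right _)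

lemma hasDerivAt_expb (b : M) (s : ℝ) :
    HasDerivAt (fun u : ℝ => exp (u • b)) (exp (s • b) * b) s := by
  have h := hasDerivAt_exp_smul_const (𝕂 := ℝ) b s
  exact h

/-- x-derivative of `exp r`. -/
lemma hE_x (b : M) (t x : ℝ) :
    HasDerivAt (fun s => exp (rMat' n b t s))
      ((-(t:ℂ)/2) • exp (rMat' n b t x)) x := by
  have hφ : HasDerivAt (fun s : ℝ => (t^3 - 3*s*t)/6) (-t/2) x := by
    have h := (((hasDerivAt_const x (t^3)).sub
      (((hasDerivAt_id x).const_mul (3:ℝ)).mul_const t))).div_const 6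
    simp only [id_eq] at h
    exact h.congr_deriv (by ring)
  have hc := (hφ.ofReal_comp).cexp.smul_const (exp ((-t : ℝ) • b))
  have hfun : (fun s => Complex.exp (((t^3 - 3*s*t)/6 : ℝ) : ℂ) • exp ((-t : ℝ) • b))
      = fun s => exp (rMat' n b t s) := by
    funext s; rw [exp_rMat']
  rw [hfun] at hc
  convert hc using 1
  rw [exp_rMat', smul_smul]
  congr 1
  push_cast
  ring

/-- t-derivative of `exp r`. -/
lemma hE_t (b : M) (t x : ℝ) :
    HasDerivAt (fun s => exp (rMat' n b s x))
      (((((t^2 - x)/2 : ℝ)) : ℂ) • exp (rMat' n b t x) - b * exp (rMat' n b t x)) t := by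
  have hψ : HasDerivAt (fun s : ℝ => (s^3 - 3*x*s)/6) ((t^2 - x)/2) t := by
    have h := (((hasDerivAt_pow 3 t).sub
      ((hasDerivAt_id t).const_mul (3*x)))).div_const 6
    simp only [id_eq] at h
    exact h.congr_deriv (by push_cast; ring)
  have hG : HasDerivAt (fun s : ℝ => exp ((-s : ℝ) • b))
      ((-1 : ℝ) • (exp ((-t : ℝ) • b) * b)) t :=
    (hasDerivAt_expb b (-t)).scomp t (hasDerivAt_neg t)
  have hc : HasDerivAt (fun s => Complex.exp (((s^3 - 3*x*s)/6 : ℝ) : ℂ) • exp ((-s : ℝ) • b)) _ t :=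
    ((hψ.ofReal_comp).cexp).smul hG
  have hfun : (fun s => Complex.exp (((s^3 - 3*x*s)/6 : ℝ) : ℂ) • exp ((-s : ℝ) • b))
      = fun s => exp (rMat' n b s x) := by
    funext s; rw [exp_rMat']
  rw [hfun] at hc
  convert hc using 1
  rw [exp_rMat']
  have hbG : b * exp ((-t : ℝ) • b) = exp ((-t : ℝ) • b) * b :=
    (Commute.exp_right ((Commute.refl b).smul_right (-t : ℝ))).eq
  rw [mul_smul_comm, hbG]
  module

/-- x-derivative of `exp (-r)`. -/
lemma hEi_x (b : M) (t x : ℝ) :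
    HasDerivAt (fun s => exp (-rMat' n b t s))
      (((t:ℂ)/2) • exp (-rMat' n b t x)) x := by
  have hφ : HasDerivAt (fun s : ℝ => -((t^3 - 3*s*t)/6)) (t/2) x := by
    have h := ((((hasDerivAt_const x (t^3)).sub
      (((hasDerivAt_id x).const_mul (3:ℝ)).mul_const t))).div_const 6).neg
    simp only [id_eq] at h
    exact h.congr_deriv (by ring)
  have hc := (hφ.ofReal_comp).cexp.smul_const (exp ((t : ℝ) • b))
  have hfun : (fun s => Complex.exp ((-((t^3 - 3*s*t)/6) : ℝ) : ℂ) • exp ((t : ℝ) • b))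
      = fun s => exp (-rMat' n b t s) := by
    funext s; rw [exp_neg_rMat']
  rw [hfun] at hc
  convert hc using 1
  rw [exp_neg_rMat', smul_smul]
  congr 1
  push_cast
  ring

/-- t-derivative of `exp (-r)`. -/
lemma hEi_t (b : M) (t x : ℝ) :
    HasDerivAt (fun s => exp (-rMat' n b s x))
      (((((x - t^2)/2 : ℝ)) : ℂ) • exp (-rMat' n b t x) + exp (-rMat' n b t x) * b) t := by
  have hψ : HasDerivAt (fun s : ℝ => -((s^3 - 3*x*s)/6)) ((x - t^2)/2) t := by
    have h := ((((hasDerivAt_pow 3 t).sub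
      ((hasDerivAt_id t).const_mul (3*x)))).div_const 6).neg
    simp only [id_eq] at h
    exact h.congr_deriv (by push_cast; ring)
  have hG : HasDerivAt (fun s : ℝ => exp ((s : ℝ) • b))
      (exp ((t : ℝ) • b) * b) t := hasDerivAt_expb b t
  have hc : HasDerivAt (fun s => Complex.exp ((-((s^3 - 3*x*s)/6) : ℝ) : ℂ) • exp ((s : ℝ) • b)) _ t :=
    ((hψ.ofReal_comp).cexp).smul hG
  have hfun : (fun s => Complex.exp ((-((s^3 - 3*x*s)/6) : ℝ) : ℂ) • exp ((s : ℝ) • b))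
      = fun s => exp (-rMat' n b s x) := by
    funext s; rw [exp_neg_rMat']
  rw [hfun] at hc
  convert hc using 1
  rw [exp_neg_rMat', smul_mul_assoc]
  module

lemma hz_x (t x : ℝ) : HasDerivAt (fun s => zRed' t s) 1 x := by
  simpa [zRed'] using (hasDerivAt_id x).sub_const (t^2/2)

lemma hz_t (t x : ℝ) : HasDerivAt (fun s => zRed' s x) (-t) t := by
  have h2 := (hasDerivAt_const t x).sub ((hasDerivAt_pow 2 t).div_const 2)
  have h : HasDerivAt (fun s : ℝ => x - s^2/2) (-t) t := by
    exact h2.congr_deriv (by push_cast; ring)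
  exact h

/-- x-derivative of `u`. -/
lemma L_ux (b : M) (p p₁ : ℝ → M) (t x : ℝ)
    (hp1 : HasDerivAt p (p₁ (zRed' t x)) (zRed' t x)) :
    HasDerivAt (fun s => exp (rMat' n b t s) * p (zRed' t s))
      (exp (rMat' n b t x) * p₁ (zRed' t x)
        + (-(t:ℂ)/2) • (exp (rMat' n b t x) * p (zRed' t x))) x := by
  have hpz : HasDerivAt (fun s => p (zRed' t s)) (p₁ (zRed' t x)) x := by
    simpa [Function.comp_def] using hp1.scomp x (hz_x t x)
  have h := (hE_x b t x).mul hpz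
  rw [smul_mul_assoc] at h
  rw [add_comm] at h
  exact h

/-- x-derivative of the x-derivative of `u`. -/
lemma L_uxx (b : M) (p p₁ p₂ : ℝ → M) (t x : ℝ)
    (hp1 : HasDerivAt p (p₁ (zRed' t x)) (zRed' t x))
    (hp2 : HasDerivAt p₁ (p₂ (zRed' t x)) (zRed' t x)) :
    HasDerivAt (fun s => exp (rMat' n b t s) * p₁ (zRed' t s)
        + (-(t:ℂ)/2) • (exp (rMat' n b t s) * p (zRed' t s)))
      (exp (rMat' n b t x) * p₂ (zRed' t x)
        + (-(t:ℂ)) • (exp (rMat' n b t x) * p₁ (zRed' t x))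
        + ((t:ℂ)^2/4) • (exp (rMat' n b t x) * p (zRed' t x))) x := by
  have hpz : HasDerivAt (fun s => p (zRed' t s)) (p₁ (zRed' t x)) x := by
    simpa [Function.comp_def] using hp1.scomp x (hz_x t x)
  have hp1z : HasDerivAt (fun s => p₁ (zRed' t s)) (p₂ (zRed' t x)) x := by
    simpa [Function.comp_def] using hp2.scomp x (hz_x t x)
  have h := ((hE_x b t x).mul hp1z).add (((hE_x b t x).mul hpz).const_smul (-(t:ℂ)/2))
  refine h.congr_deriv ?_
  simp only [smul_mul_assoc]
  module

/-- t-derivative of `u`. -/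
lemma L_ut (b : M) (p p₁ : ℝ → M) (t x : ℝ)
    (hp1 : HasDerivAt p (p₁ (zRed' t x)) (zRed' t x)) :
    HasDerivAt (fun s => exp (rMat' n b s x) * p (zRed' s x))
      ((((t^2 - x)/2 : ℝ) : ℂ) • (exp (rMat' n b t x) * p (zRed' t x))
        - b * (exp (rMat' n b t x) * p (zRed' t x))
        + (-(t:ℂ)) • (exp (rMat' n b t x) * p₁ (zRed' t x))) t := by
  have hpz : HasDerivAt (fun s => p (zRed' s x)) ((-t : ℝ) • p₁ (zRed' t x)) t :=
    hp1.scomp t (hz_t t x)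
  have h := (hE_t b t x).mul hpz
  refine h.congr_deriv ?_
  simp only [sub_mul, smul_mul_assoc, mul_smul_comm, mul_assoc]
  rw [← real_smul (-t)]
  push_cast
  module

/-- x-derivative of `v`. -/
lemma L_vx (b : M) (q q₁ : ℝ → M) (t x : ℝ)
    (hq1 : HasDerivAt q (q₁ (zRed' t x)) (zRed' t x)) :
    HasDerivAt (fun s => q (zRed' t s) * exp (-rMat' n b t s))
      (q₁ (zRed' t x) * exp (-rMat' n b t x)
        + ((t:ℂ)/2) • (q (zRed' t x) * exp (-rMat' n b t x))) x := by
  have hqz : HasDerivAt (fun s => q (zRed' t s)) (q₁ (zRed' t x)) x := by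
    simpa [Function.comp_def] using hq1.scomp x (hz_x t x)
  have h := hqz.mul (hEi_x b t x)
  refine h.congr_deriv ?_
  simp only [mul_smul_comm]

/-- x-derivative of the x-derivative of `v`. -/
lemma L_vxx (b : M) (q q₁ q₂ : ℝ → M) (t x : ℝ)
    (hq1 : HasDerivAt q (q₁ (zRed' t x)) (zRed' t x))
    (hq2 : HasDerivAt q₁ (q₂ (zRed' t x)) (zRed' t x)) :
    HasDerivAt (fun s => q₁ (zRed' t s) * exp (-rMat' n b t s)
        + ((t:ℂ)/2) • (q (zRed' t s) * exp (-rMat' n b t s)))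
      (q₂ (zRed' t x) * exp (-rMat' n b t x)
        + (t:ℂ) • (q₁ (zRed' t x) * exp (-rMat' n b t x))
        + ((t:ℂ)^2/4) • (q (zRed' t x) * exp (-rMat' n b t x))) x := by
  have hqz : HasDerivAt (fun s => q (zRed' t s)) (q₁ (zRed' t x)) x := by
    simpa [Function.comp_def] using hq1.scomp x (hz_x t x)
  have hq1z : HasDerivAt (fun s => q₁ (zRed' t s)) (q₂ (zRed' t x)) x := by
    simpa [Function.comp_def] using hq2.scomp x (hz_x t x)
  have h := (hq1z.mul (hEi_x b t x)).add ((hqz.mul (hEi_x b t x)).const_smul ((t:ℂ)/2))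
  refine h.congr_deriv ?_
  simp only [mul_smul_comm]
  module

/-- t-derivative of `v`. -/
lemma L_vt (b : M) (q q₁ : ℝ → M) (t x : ℝ)
    (hq1 : HasDerivAt q (q₁ (zRed' t x)) (zRed' t x)) :
    HasDerivAt (fun s => q (zRed' s x) * exp (-rMat' n b s x))
      ((((x - t^2)/2 : ℝ) : ℂ) • (q (zRed' t x) * exp (-rMat' n b t x))
        + (q (zRed' t x) * exp (-rMat' n b t x)) * b
        + (-(t:ℂ)) • (q₁ (zRed' t x) * exp (-rMat' n b t x))) t := by
  have hqz : HasDerivAt (fun s => q (zRed' s x)) ((-t : ℝ) • q₁ (zRed' t x)) t :=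
    hq1.scomp t (hz_t t x)
  have h := hqz.mul (hEi_t b t x)
  refine h.congr_deriv ?_
  simp only [mul_add, mul_smul_comm, smul_mul_assoc, mul_assoc]
  rw [← real_smul (-t)]
  push_cast
  module

/-- the key algebraic identity for `u`. -/
lemma key_u (b : M) (t x : ℝ) (E Ei P P' P'' Q : M)
    (hinv : Ei * E = 1) (hbE : b * E = E * b)
    (hP : P'' = -((((zRed' t x : ℝ) : ℂ)/2) • P) - b * P - 2 * (P * Q * P)) :
    (((t^2 - x)/2 : ℝ) : ℂ) • (E * P) - b * (E * P) + (-(t:ℂ)) • (E * P')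
      = (E * P'' + (-(t:ℂ)) • (E * P') + ((t:ℂ)^2/4) • (E * P))
        + 2 * ((E * P) * (Q * Ei) * (E * P)) := by
  have h2 : ∀ X : M, (2 : M) * X = (2:ℂ) • X := fun X => by
    rw [two_mul, ← two_smul ℂ]
  have huvu : (E * P) * (Q * Ei) * (E * P) = E * (P * Q * P) := by
    rw [mul_assoc (E * P), mul_assoc Q, ← mul_assoc Ei, hinv, one_mul,
      mul_assoc E P, ← mul_assoc P Q P, ← mul_assoc E]
  have hEbP : E * (b * P) = b * (E * P) := by
    rw [← mul_assoc, ← hbE, mul_assoc]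
  simp only [hP, huvu, h2, mul_sub, mul_neg, mul_smul_comm, hEbP]
  simp only [zRed']
  push_cast
  module

/-- the key algebraic identity for `v`. -/
lemma key_v (b : M) (t x : ℝ) (E Ei Q Q' Q'' P : M)
    (hinv : Ei * E = 1) (hbEi : b * Ei = Ei * b)
    (hQ : Q'' = -((((zRed' t x : ℝ) : ℂ)/2) • Q) - Q * b - 2 * (Q * P * Q)) :
    (((x - t^2)/2 : ℝ) : ℂ) • (Q * Ei) + (Q * Ei) * b + (-(t:ℂ)) • (Q' * Ei)
      = -(Q'' * Ei + (t:ℂ) • (Q' * Ei) + ((t:ℂ)^2/4) • (Q * Ei))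
        - 2 * ((Q * Ei) * (E * P) * (Q * Ei)) := by
  have h2 : ∀ X : M, (2 : M) * X = (2:ℂ) • X := fun X => by
    rw [two_mul, ← two_smul ℂ]
  have hvuv : (Q * Ei) * (E * P) * (Q * Ei) = (Q * P * Q) * Ei := by
    rw [mul_assoc Q Ei, ← mul_assoc Ei E, hinv, one_mul, ← mul_assoc (Q * P) Q Ei]
  have hQEib : (Q * Ei) * b = (Q * b) * Ei := by
    rw [mul_assoc, ← hbEi, ← mul_assoc]
  simp only [hQ, hvuv, h2, hQEib, sub_mul, neg_mul, neg_smul, smul_mul_assoc]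
  simp only [zRed']
  push_cast
  module

end NLSAux

end NLSAuxSection


attribute [local instance] Matrix.normedAddCommGroup Matrix.normedSpace

/-- if `p, q` satisfy the Galilean-invariant reduction
`p'' = −(z/2)p − bp − 2pqp`, `q'' = −(z/2)q − qb − 2qpq`, then
`u = e^r p(z)`, `v = q(z) e^{−r}` satisfy the matrix NLS system
`u_t = u_xx + 2uvu`, `v_t = −v_xx − 2vuv`. -/
theorem matrixNLS_galilean_reduction (n : ℕ) (hn : 1 ≤ n)
    (b : Matrix (Fin n) (Fin n) ℂ)
    (p q : ℝ → Matrix (Fin n) (Fin n) ℂ)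
    (hp : Differentiable ℝ p) (hp' : Differentiable ℝ (deriv p))
    (hq : Differentiable ℝ q) (hq' : Differentiable ℝ (deriv q))
    (hpeq : ∀ z : ℝ, deriv (deriv p) z =
      -(((z : ℂ)/2) • p z) - b * p z - 2 * (p z * q z * p z))
    (hqeq : ∀ z : ℝ, deriv (deriv q) z =
      -(((z : ℂ)/2) • q z) - q z * b - 2 * (q z * p z * q z)) :
    (∀ w : ℝ × ℝ,
      partialT (uRed n b p) w = partialX (partialX (uRed n b p)) w
        + 2 * (uRed n b p w * vRed n b q w * uRed n b p w)) ∧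
    (∀ w : ℝ × ℝ,
      partialT (vRed n b q) w = -(partialX (partialX (vRed n b q)) w)
        - 2 * (vRed n b q w * uRed n b p w * vRed n b q w)) := by
  refine ⟨fun w => ?_, fun w => ?_⟩
  · obtain ⟨t, x⟩ := w
    have h1 : partialT (uRed n b p) (t, x)
        = (((t^2 - x)/2 : ℝ) : ℂ) • (NormedSpace.exp (rMat n b t x) * p (zRed t x))
          - b * (NormedSpace.exp (rMat n b t x) * p (zRed t x))
          + (-(t:ℂ)) • (NormedSpace.exp (rMat n b t x) * deriv p (zRed t x)) :=
      (NLSAux.transfer₁ (NLSAux.L_ut b p (deriv p) t x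
        (NLSAux.transfer₂ (hp _).hasDerivAt))).deriv
    have hXone : ∀ t' x' : ℝ, partialX (uRed n b p) (t', x')
        = NormedSpace.exp (rMat n b t' x') * deriv p (zRed t' x')
          + (-(t':ℂ)/2) • (NormedSpace.exp (rMat n b t' x') * p (zRed t' x')) :=
      fun t' x' => (NLSAux.transfer₁ (NLSAux.L_ux b p (deriv p) t' x'
        (NLSAux.transfer₂ (hp _).hasDerivAt))).deriv
    have h2 : partialX (partialX (uRed n b p)) (t, x)
        = NormedSpace.exp (rMat n b t x) * deriv (deriv p) (zRed t x)
          + (-(t:ℂ)) • (NormedSpace.exp (rMat n b t x) * deriv p (zRed t x))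
          + ((t:ℂ)^2/4) • (NormedSpace.exp (rMat n b t x) * p (zRed t x)) := by
      have hfun : (fun s => partialX (uRed n b p) (t, s))
          = (fun s => NormedSpace.exp (rMat n b t s) * deriv p (zRed t s)
              + (-(t:ℂ)/2) • (NormedSpace.exp (rMat n b t s) * p (zRed t s))) :=
        funext fun s => hXone t s
      show deriv (fun s => partialX (uRed n b p) (t, s)) x = _
      rw [hfun]
      exact (NLSAux.transfer₁ (NLSAux.L_uxx b p (deriv p) (deriv (deriv p)) t x
        (NLSAux.transfer₂ (hp _).hasDerivAt)
        (NLSAux.transfer₂ (hp' _).hasDerivAt))).deriv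
    rw [h1, h2]
    exact NLSAux.key_u b t x (NormedSpace.exp (rMat n b t x))
      (NormedSpace.exp (-(rMat n b t x))) (p (zRed t x)) (deriv p (zRed t x))
      (deriv (deriv p) (zRed t x)) (q (zRed t x))
      (NLSAux.exp_neg_mul_exp_self (rMat n b t x)) (NLSAux.commute_b_exp b t x)
      (hpeq (zRed t x))
  · obtain ⟨t, x⟩ := w
    have h1 : partialT (vRed n b q) (t, x)
        = (((x - t^2)/2 : ℝ) : ℂ) • (q (zRed t x) * NormedSpace.exp (-(rMat n b t x)))
          + (q (zRed t x) * NormedSpace.exp (-(rMat n b t x))) * b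
          + (-(t:ℂ)) • (deriv q (zRed t x) * NormedSpace.exp (-(rMat n b t x))) :=
      (NLSAux.transfer₁ (NLSAux.L_vt b q (deriv q) t x
        (NLSAux.transfer₂ (hq _).hasDerivAt))).deriv
    have hXone : ∀ t' x' : ℝ, partialX (vRed n b q) (t', x')
        = deriv q (zRed t' x') * NormedSpace.exp (-(rMat n b t' x'))
          + ((t':ℂ)/2) • (q (zRed t' x') * NormedSpace.exp (-(rMat n b t' x'))) :=
      fun t' x' => (NLSAux.transfer₁ (NLSAux.L_vx b q (deriv q) t' x'
        (NLSAux.transfer₂ (hq _).hasDerivAt))).deriv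
    have h2 : partialX (partialX (vRed n b q)) (t, x)
        = deriv (deriv q) (zRed t x) * NormedSpace.exp (-(rMat n b t x))
          + (t:ℂ) • (deriv q (zRed t x) * NormedSpace.exp (-(rMat n b t x)))
          + ((t:ℂ)^2/4) • (q (zRed t x) * NormedSpace.exp (-(rMat n b t x))) := by
      have hfun : (fun s => partialX (vRed n b q) (t, s))
          = (fun s => deriv q (zRed t s) * NormedSpace.exp (-(rMat n b t s))
              + ((t:ℂ)/2) • (q (zRed t s) * NormedSpace.exp (-(rMat n b t s)))) :=
        funext fun s => hXone t s
      show deriv (fun s => partialX (vRed n b q) (t, s)) x = _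
      rw [hfun]
      exact (NLSAux.transfer₁ (NLSAux.L_vxx b q (deriv q) (deriv (deriv q)) t x
        (NLSAux.transfer₂ (hq _).hasDerivAt)
        (NLSAux.transfer₂ (hq' _).hasDerivAt))).deriv
    rw [h1, h2]
    exact NLSAux.key_v b t x (NormedSpace.exp (rMat n b t x))
      (NormedSpace.exp (-(rMat n b t x))) (q (zRed t x)) (deriv q (zRed t x))
      (deriv (deriv q) (zRed t x)) (p (zRed t x))
      (NLSAux.exp_neg_mul_exp_self (rMat n b t x)) (NLSAux.commute_b_exp_neg b t x)
      (hqeq (zRed t x))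
end

section
/- Let n ≥ 1 and b ∈ Mat_n. If p, q : ℂ → Mat_n are twice differentiable and satisfy p''(z) = −(z/2) p(z) − b p(z) − 2 p(z) q(z) p(z) and q''(z) = −(z/2) q(z) − q(z) b − 2 q(z) p(z) q(z) for all z, then the function z ↦ q(z) p'(z) − q'(z) p(z) has zero derivative, i.e., q p' − q' p is a constant matrix. -/
attribute [local instance] Matrix.normedAddCommGroup Matrix.normedSpace

noncomputable def mulL (n : ℕ) :
    Matrix (Fin n) (Fin n) ℂ →L[ℂ] Matrix (Fin n) (Fin n) ℂ →L[ℂ] Matrix (Fin n) (Fin n) ℂ :=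
  LinearMap.toContinuousLinearMap
    { toFun := fun A => LinearMap.toContinuousLinearMap (LinearMap.mul ℂ _ A)
      map_add' := by intro A B; ext C; simp [add_mul]
      map_smul' := by intro c A; ext C; simp [Matrix.smul_mul] }

noncomputable def clmNorm (n : ℕ) :
    NormedAddCommGroup (Matrix (Fin n) (Fin n) ℂ →L[ℂ] Matrix (Fin n) (Fin n) ℂ) :=
  ContinuousLinearMap.toNormedAddCommGroup

attribute [local instance] clmNorm

noncomputable def clmSpace (n : ℕ) :
    NormedSpace ℂ (Matrix (Fin n) (Fin n) ℂ →L[ℂ] Matrix (Fin n) (Fin n) ℂ) :=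
  ContinuousLinearMap.toNormedSpace

attribute [local instance] clmSpace

/-- for solutions of the reduced NLS system, `q p' − q' p` has zero
derivative, i.e. it is a constant matrix. -/
theorem matrixNLS_first_integral (n : ℕ) (hn : 1 ≤ n)
    (b : Matrix (Fin n) (Fin n) ℂ)
    (p q : ℂ → Matrix (Fin n) (Fin n) ℂ)
    (hp : Differentiable ℂ p) (hp' : Differentiable ℂ (deriv p))
    (hq : Differentiable ℂ q) (hq' : Differentiable ℂ (deriv q))
    (hpeq : ∀ z : ℂ, deriv (deriv p) z =
      -((z/2) • p z) - b * p z - 2 * (p z * q z * p z))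
    (hqeq : ∀ z : ℂ, deriv (deriv q) z =
      -((z/2) • q z) - q z * b - 2 * (q z * p z * q z)) :
    (∀ z : ℂ, deriv (fun w => q w * deriv p w - deriv q w * p w) z = 0) ∧
    (∃ c : Matrix (Fin n) (Fin n) ℂ,
      ∀ z : ℂ, q z * deriv p z - deriv q z * p z = c) := by
  have key : ∀ z : ℂ, HasDerivAt (fun w => q w * deriv p w - deriv q w * p w) 0 z := by
    intro z
    have hpz : HasDerivAt p (deriv p z) z := (hp z).hasDerivAt
    have hqz : HasDerivAt q (deriv q z) z := (hq z).hasDerivAt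
    have hpz' : HasDerivAt (deriv p) (deriv (deriv p) z) z := (hp' z).hasDerivAt
    have hqz' : HasDerivAt (deriv q) (deriv (deriv q) z) z := (hq' z).hasDerivAt
    have hc1 : HasDerivAt (fun w => mulL n (q w)) (mulL n (deriv q z)) z :=
      (mulL n).hasFDerivAt.comp_hasDerivAt z hqz
    have hc2 : HasDerivAt (fun w => mulL n (deriv q w)) (mulL n (deriv (deriv q) z)) z :=
      (mulL n).hasFDerivAt.comp_hasDerivAt z hqz'
    have h1 : HasDerivAt (fun w => mulL n (q w) (deriv p w))
        (mulL n (deriv q z) (deriv p z) + mulL n (q z) (deriv (deriv p) z)) z :=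
      hc1.clm_apply hpz'
    have h2 : HasDerivAt (fun w => mulL n (deriv q w) (p w))
        (mulL n (deriv (deriv q) z) (p z) + mulL n (deriv q z) (deriv p z)) z :=
      hc2.clm_apply hpz
    have h3 := h1.sub h2
    have hml : ∀ A B : Matrix (Fin n) (Fin n) ℂ, mulL n A B = A * B := fun A B => rfl
    simp only [hml] at h3
    refine h3.congr_deriv ?_
    rw [hpeq z, hqeq z]
    simp only [two_mul, mul_add, add_mul, mul_sub, sub_mul, Matrix.mul_smul, Matrix.smul_mul, mul_neg, neg_mul,
      mul_assoc]
    abel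
  refine ⟨fun z => (key z).deriv, ?_⟩
  refine ⟨q 0 * deriv p 0 - deriv q 0 * p 0, fun z => ?_⟩
  have hdiff : Differentiable ℝ (fun w => q w * deriv p w - deriv q w * p w) := by
    intro z
    exact ((key z).hasFDerivAt.restrictScalars ℝ).differentiableAt
  have hfd : ∀ z : ℂ, fderiv ℝ (fun w => q w * deriv p w - deriv q w * p w) z = 0 := by
    intro z
    have := ((key z).hasFDerivAt.restrictScalars ℝ).fderiv
    refine this.trans ?_
    ext v
    simp
    rfl
  exact is_const_of_fderiv_eq_zero hdiff hfd z 0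
end

section
/- Let n ≥ 1, b ∈ Mat_n, and γ ∈ ℂ. Suppose f, h : ℂ → Mat_n are differentiable (with f twice differentiable) and satisfy f'(z) = −f(z)² − (z/2)·I − b − h(z) and h'(z) = f(z) h(z) + h(z) f(z) − γ·I for all z. Then f satisfies the matrix Painlevé II equation P₂⁰: f''(z) = 2 f(z)³ + z·f(z) + b·f(z) + f(z)·b + (γ − 1/2)·I for all z. -/
attribute [local instance] Matrix.normedAddCommGroup Matrix.normedSpace

noncomputable def mulCLM (n : ℕ) :
    Matrix (Fin n) (Fin n) ℂ →L[ℂ] Matrix (Fin n) (Fin n) ℂ →L[ℂ] Matrix (Fin n) (Fin n) ℂ :=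
  LinearMap.toContinuousLinearMap
    ((LinearMap.toContinuousLinearMap
        (E := Matrix (Fin n) (Fin n) ℂ) (F' := Matrix (Fin n) (Fin n) ℂ)).toLinearMap ∘ₗ
      LinearMap.mul ℂ (Matrix (Fin n) (Fin n) ℂ))

lemma mulCLM_apply {n : ℕ} (A B : Matrix (Fin n) (Fin n) ℂ) : mulCLM n A B = A * B := rfl

lemma HasDerivAt.matMul {n : ℕ} {u v : ℂ → Matrix (Fin n) (Fin n) ℂ}
    {u' v' : Matrix (Fin n) (Fin n) ℂ} {x : ℂ}
    (hu : HasDerivAt u u' x) (hv : HasDerivAt v v' x) :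
    HasDerivAt (fun z => u z * v z) (u' * v x + u x * v') x := by
  letI := (Matrix.linftyOpNormedRing : NormedRing (Matrix (Fin n) (Fin n) ℂ))
  letI := (Matrix.linftyOpNormedAlgebra : NormedAlgebra ℂ (Matrix (Fin n) (Fin n) ℂ))
  exact hu.fun_mul hv

lemma P20_algebra {n : ℕ} (F H B : Matrix (Fin n) (Fin n) ℂ) (z γ : ℂ) :
    -(( -(F^2) - (z/2)•(1:Matrix (Fin n) (Fin n) ℂ) - B - H) * F
        + F * (-(F^2) - (z/2)•(1:Matrix (Fin n) (Fin n) ℂ) - B - H))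
      - ((1:ℂ)/2)•(1:Matrix (Fin n) (Fin n) ℂ)
      - (F*H + H*F - γ•(1:Matrix (Fin n) (Fin n) ℂ))
    = (2:ℂ)•F^3 + z•F + B*F + F*B + (γ-1/2)•(1:Matrix (Fin n) (Fin n) ℂ) := by
  simp only [sub_mul, mul_sub, neg_mul, mul_neg, smul_mul_assoc, mul_smul_comm,
    one_mul, mul_one, ← pow_succ, ← pow_succ']
  module

/-- if `f' = −f² − z/2 − b − h` and `h' = fh + hf − γ`, then `f`
satisfies the matrix Painlevé II equation P₂⁰:
`f'' = 2f³ + z f + b f + f b + (γ − 1/2) I`. -/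
theorem fh_system_gives_P20 (n : ℕ) (hn : 1 ≤ n)
    (b : Matrix (Fin n) (Fin n) ℂ) (γ : ℂ)
    (f h : ℂ → Matrix (Fin n) (Fin n) ℂ)
    (hf : Differentiable ℂ f) (hf' : Differentiable ℂ (deriv f))
    (hh : Differentiable ℂ h)
    (hfeq : ∀ z : ℂ, deriv f z =
      -(f z) ^ 2 - (z/2) • (1 : Matrix (Fin n) (Fin n) ℂ) - b - h z)
    (hheq : ∀ z : ℂ, deriv h z =
      f z * h z + h z * f z - γ • (1 : Matrix (Fin n) (Fin n) ℂ)) :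
    ∀ z : ℂ, deriv (deriv f) z =
      (2 : ℂ) • (f z) ^ 3 + z • f z + b * f z + f z * b
        + (γ - 1/2) • (1 : Matrix (Fin n) (Fin n) ℂ) := by
  intro z
  have hfg : deriv f = fun z => -(f z) ^ 2 - (z/2) • (1 : Matrix (Fin n) (Fin n) ℂ) - b - h z :=
    funext hfeq
  have hsq : HasDerivAt (fun z => (f z) ^ 2)
      (deriv f z * f z + f z * deriv f z) z := by
    have := ((hf z).hasDerivAt).matMul ((hf z).hasDerivAt)
    simp only [sq]
    exact this
  have hlin : HasDerivAt (fun z : ℂ => (z/2) • (1 : Matrix (Fin n) (Fin n) ℂ))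
      (((1:ℂ)/2) • (1 : Matrix (Fin n) (Fin n) ℂ)) z := by
    have := ((hasDerivAt_id z).div_const 2).smul_const (1 : Matrix (Fin n) (Fin n) ℂ)
    simp only [id, one_div] at this ⊢
    exact this
  have key := ((hsq.neg.sub hlin).sub_const b).sub ((hh z).hasDerivAt)
  have hdd : deriv (deriv f) z
      = deriv (fun z => -(f z) ^ 2 - (z/2) • (1 : Matrix (Fin n) (Fin n) ℂ) - b - h z) z := by
    rw [hfg]
  have key' : HasDerivAt (fun z => -(f z) ^ 2 - (z/2) • (1 : Matrix (Fin n) (Fin n) ℂ) - b - h z)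
      (-(deriv f z * f z + f z * deriv f z) - ((1:ℂ)/2) • (1 : Matrix (Fin n) (Fin n) ℂ) - deriv h z) z := key
  rw [hdd]
  refine key'.deriv.trans ?_
  rw [hfeq z, hheq z]
  exact P20_algebra (f z) (h z) b z γ
end

section
/- Let n ≥ 1 and c ∈ Mat_n. Suppose p, q : ℂ → Mat_n are twice differentiable, p(z) and q(z) are invertible for every z, the system p''(z) = −(z/2) p(z) − 2 p(z) q(z) p(z), q''(z) = −(z/2) q(z) − 2 q(z) p(z) q(z) holds for all z, and the first integral q(z) p'(z) − q'(z) p(z) = c holds for all z. Define f(z) = p(z)⁻¹ p'(z) and h(z) = 2 q(z) p(z). Then f and h satisfy f'(z) = −f(z)² − (z/2)·I − h(z) and h'(z) = 2 h(z) f(z) − 2c for all z. -/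
attribute [local instance] Matrix.normedAddCommGroup Matrix.normedSpace

namespace NLSAuxMatC

variable {n : ℕ}

lemma hasDerivAt_entrywise {f : ℂ → Matrix (Fin n) (Fin n) ℂ}
    {f' : Matrix (Fin n) (Fin n) ℂ} {z : ℂ} :
    HasDerivAt f f' z ↔ ∀ i j, HasDerivAt (fun w => f w i j) (f' i j) z := by
  exact hasDerivAt_pi.trans (forall_congr' fun i => hasDerivAt_pi)

lemma entry_differentiable {p : ℂ → Matrix (Fin n) (Fin n) ℂ}
    (hp : Differentiable ℂ p) (i j : Fin n) :
    Differentiable ℂ fun w => p w i j := fun z =>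
  ((hasDerivAt_entrywise.mp (hp z).hasDerivAt) i j).differentiableAt

lemma hasDerivAt_matMul {A B : ℂ → Matrix (Fin n) (Fin n) ℂ}
    {A' B' : Matrix (Fin n) (Fin n) ℂ} {z : ℂ}
    (hA : HasDerivAt A A' z) (hB : HasDerivAt B B' z) :
    HasDerivAt (fun w => A w * B w) (A' * B z + A z * B') z := by
  rw [hasDerivAt_entrywise] at hA hB ⊢
  intro i j
  simp only [Matrix.mul_apply, Matrix.add_apply]
  rw [← Finset.sum_add_distrib]
  exact HasDerivAt.fun_sum fun k _ => (hA i k).fun_mul (hB k j)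

lemma differentiable_det {A : ℂ → Matrix (Fin n) (Fin n) ℂ}
    (h : ∀ i j, Differentiable ℂ fun w => A w i j) :
    Differentiable ℂ fun w => (A w).det := by
  simp only [Matrix.det_apply, Units.smul_def, zsmul_eq_mul]
  apply Differentiable.fun_sum
  intro σ _
  apply Differentiable.const_mul
  intro z
  exact DifferentiableAt.fun_finsetProd fun i _ => (h (σ i) i) z

lemma differentiable_inv {p : ℂ → Matrix (Fin n) (Fin n) ℂ}
    (hp : Differentiable ℂ p) (hpinv : ∀ z, IsUnit (p z)) :
    Differentiable ℂ fun w => (p w)⁻¹ := by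
  have hent : ∀ i j, Differentiable ℂ fun w => p w i j := entry_differentiable hp
  have hdet : Differentiable ℂ fun w => (p w).det := differentiable_det hent
  have hdetne : ∀ w, (p w).det ≠ 0 := fun w =>
    (((Matrix.isUnit_iff_isUnit_det (p w)).mp (hpinv w))).ne_zero
  have hadj : Differentiable ℂ fun w => (p w).adjugate := by
    refine differentiable_pi.mpr ?_
    intro i
    rw [differentiable_pi]
    intro j
    simp only [Matrix.adjugate_apply]
    apply differentiable_det
    intro k l
    simp only [Matrix.updateRow_apply]
    by_cases hk : k = j
    · simp [hk]
    · simpa [hk] using hent k l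
  have heq : (fun w => (p w)⁻¹) = fun w => ((p w).det)⁻¹ • (p w).adjugate := by
    funext w
    rw [Matrix.inv_def, Ring.inverse_eq_inv]
  rw [heq]
  exact (hdet.inv hdetne).smul hadj

end NLSAuxMatC

/-- for solutions of the reduced NLS system with `b = 0` and matrix
first integral `q p' − q' p = c`, the variables `f = p⁻¹ p'`, `h = 2qp` satisfy
`f' = −f² − z/2 − h`, `h' = 2hf − 2c`. -/
theorem matrixNLS_fh_system_matrixC (n : ℕ) (hn : 1 ≤ n)
    (c : Matrix (Fin n) (Fin n) ℂ)
    (p q : ℂ → Matrix (Fin n) (Fin n) ℂ)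
    (hp : Differentiable ℂ p) (hp' : Differentiable ℂ (deriv p))
    (hq : Differentiable ℂ q) (hq' : Differentiable ℂ (deriv q))
    (hpinv : ∀ z : ℂ, IsUnit (p z)) (hqinv : ∀ z : ℂ, IsUnit (q z))
    (hpeq : ∀ z : ℂ, deriv (deriv p) z =
      -((z/2) • p z) - 2 * (p z * q z * p z))
    (hqeq : ∀ z : ℂ, deriv (deriv q) z =
      -((z/2) • q z) - 2 * (q z * p z * q z))
    (hint : ∀ z : ℂ, q z * deriv p z - deriv q z * p z = c) :
    (∀ z : ℂ, deriv (fun w => (p w)⁻¹ * deriv p w) z =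
      -((p z)⁻¹ * deriv p z) ^ 2 - (z/2) • (1 : Matrix (Fin n) (Fin n) ℂ)
        - 2 * (q z * p z)) ∧
    (∀ z : ℂ, deriv (fun w => 2 * (q w * p w)) z =
      2 * ((2 * (q z * p z)) * ((p z)⁻¹ * deriv p z)) - 2 * c) := by
  have hdetu : ∀ z : ℂ, IsUnit (p z).det := fun z =>
    (Matrix.isUnit_iff_isUnit_det (p z)).mp (hpinv z)
  have hP1 : ∀ z : ℂ, (p z)⁻¹ * p z = 1 := fun z => Matrix.nonsing_inv_mul _ (hdetu z)
  have hP2 : ∀ z : ℂ, p z * (p z)⁻¹ = 1 := fun z => Matrix.mul_nonsing_inv _ (hdetu z)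
  have hg : Differentiable ℂ fun w => (p w)⁻¹ := NLSAuxMatC.differentiable_inv hp hpinv
  -- derivative of the inverse
  have hDinv : ∀ z : ℂ, HasDerivAt (fun w => (p w)⁻¹)
      (-((p z)⁻¹ * deriv p z * (p z)⁻¹)) z := by
    intro z
    have hgd : HasDerivAt (fun w => (p w)⁻¹) (deriv (fun w => (p w)⁻¹) z) z :=
      (hg z).hasDerivAt
    have hprod : HasDerivAt (fun w => (p w)⁻¹ * p w)
        (deriv (fun w => (p w)⁻¹) z * p z + (p z)⁻¹ * deriv p z) z :=
      NLSAuxMatC.hasDerivAt_matMul hgd (hp z).hasDerivAt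
    have hconst : HasDerivAt (fun w : ℂ => (p w)⁻¹ * p w) 0 z := by
      have : (fun w : ℂ => (p w)⁻¹ * p w) = fun _ => (1 : Matrix (Fin n) (Fin n) ℂ) := by
        funext w; exact hP1 w
      rw [this]; exact hasDerivAt_const z 1
    have h0 : deriv (fun w => (p w)⁻¹) z * p z + (p z)⁻¹ * deriv p z = 0 :=
      hprod.unique hconst
    have hD : deriv (fun w => (p w)⁻¹) z = -((p z)⁻¹ * deriv p z * (p z)⁻¹) := by
      have h1 : deriv (fun w => (p w)⁻¹) z * p z = -((p z)⁻¹ * deriv p z) := by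
        rw [eq_neg_iff_add_eq_zero]; exact h0
      calc deriv (fun w => (p w)⁻¹) z
          = deriv (fun w => (p w)⁻¹) z * (p z * (p z)⁻¹) := by rw [hP2, mul_one]
        _ = deriv (fun w => (p w)⁻¹) z * p z * (p z)⁻¹ := by rw [mul_assoc]
        _ = -((p z)⁻¹ * deriv p z * (p z)⁻¹) := by rw [h1, neg_mul]
    rw [← hD]; exact hgd
  constructor
  · intro z
    have hf : HasDerivAt (fun w => (p w)⁻¹ * deriv p w)
        (-((p z)⁻¹ * deriv p z * (p z)⁻¹) * deriv p z + (p z)⁻¹ * deriv (deriv p) z) z :=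
      NLSAuxMatC.hasDerivAt_matMul (hDinv z) (hp' z).hasDerivAt
    refine hf.deriv.trans ?_; rw [hpeq z]
    have e1 : -((p z)⁻¹ * deriv p z * (p z)⁻¹) * deriv p z
        = -((p z)⁻¹ * deriv p z) ^ 2 := by
      rw [sq]; noncomm_ring
    have e2 : (p z)⁻¹ * (-((z/2) • p z) - 2 * (p z * q z * p z))
        = -((z/2) • (1 : Matrix (Fin n) (Fin n) ℂ)) - 2 * (q z * p z) := by
      rw [mul_sub, mul_neg, mul_smul_comm, hP1]
      congr 1
      calc (p z)⁻¹ * (2 * (p z * q z * p z))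
          = 2 * ((p z)⁻¹ * p z * (q z * p z)) := by noncomm_ring
        _ = 2 * (q z * p z) := by rw [hP1, one_mul]
    rw [e1, e2]
    abel
  · intro z
    have hqp : HasDerivAt (fun w => q w * p w)
        (deriv q z * p z + q z * deriv p z) z :=
      NLSAuxMatC.hasDerivAt_matMul (hq z).hasDerivAt (hp z).hasDerivAt
    have h2 : HasDerivAt (fun w => 2 * (q w * p w))
        (0 * (q z * p z) + 2 * (deriv q z * p z + q z * deriv p z)) z :=
      NLSAuxMatC.hasDerivAt_matMul (hasDerivAt_const z 2) hqp
    refine h2.deriv.trans ?_; rw [← hint z]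
    have key : (2 * (q z * p z)) * ((p z)⁻¹ * deriv p z) = 2 * (q z * deriv p z) := by
      calc (2 * (q z * p z)) * ((p z)⁻¹ * deriv p z)
          = 2 * (q z * (p z * (p z)⁻¹) * deriv p z) := by noncomm_ring
        _ = 2 * (q z * deriv p z) := by rw [hP2, mul_one]
    rw [key]
    noncomm_ring
end
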